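/- Let η be a random variable on [0,1] solving the RDE η =_d χ·(η₁ + (1-η₁)η₂η₃) where η₁,η₂,η₃ are independent copies of η with mean E[η] = z_mid and χ is an independent Bernoulli(α/(α+1)) random variable, α > 4, and suppose the law of η is the minimal solution ν̲_mid. Then P[η = 0] = z_mid and P[η = 1] = 0, where z_mid = 1/2 - √(1/4 - 1/α). -/

import Mathlib

open MeasureTheory

set_option maxHeartbeats 1000000

private lemma cubic_roots' (α z x : ℝ) (hα : 0 < α) (hαz : α * (z * (1 - z)) = 1)
    (hx : x = α * x ^ 2 * (1 - x)) : x = 0 ∨ x = z ∨ x = 1 - z := by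
  have h : α * x * (x - z) * (x - (1 - z)) = 0 := by linear_combination x * hαz + hx
  rcases mul_eq_zero.mp h with h1 | h1
  · rcases mul_eq_zero.mp h1 with h2 | h2
    · rcases mul_eq_zero.mp h2 with h3 | h3
      · exact absurd h3 hα.ne'
      · exact Or.inl h3
    · exact Or.inr (Or.inl (by linarith))
  · exact Or.inr (Or.inr (by linarith))

/-- Let `α > 4` and `z_mid = 1/2 - √(1/4 - 1/α)`. Let `ν` be the law of a `[0,1]`-valued
random variable `η` with mean `z_mid` solving the higher-level RDE
`η =_d χ·(η₁ + (1-η₁)η₂η₃)`, where `η₁,η₂,η₃` are independent copies of `η` and `χ` is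
an independent Bernoulli(α/(α+1)) variable; assume `ν` is the minimal solution
`ν̲_mid`, i.e. it is not concentrated on `{0,1}`. Then `P[η = 0] = z_mid` and
`P[η = 1] = 0`. -/
theorem stmt11 (α : ℝ) (hα : 4 < α) (zmid : ℝ)
    (hz : zmid = 1 / 2 - Real.sqrt (1 / 4 - 1 / α))
    (ν : Measure ℝ) [IsProbabilityMeasure ν]
    (hsupp : ν (Set.Icc 0 1) = 1)
    (hmean : ∫ x, x ∂ν = zmid)
    (hRDE : ν = Measure.map
        (fun q : ℝ × ℝ × ℝ × ℝ => q.1 * (q.2.1 + (1 - q.2.1) * q.2.2.1 * q.2.2.2))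
        ((ENNReal.ofReal (α / (α + 1)) • Measure.dirac (1:ℝ)
            + ENNReal.ofReal (1 / (α + 1)) • Measure.dirac (0:ℝ)).prod
          (ν.prod (ν.prod ν))))
    (hmin : ν ({0, 1} : Set ℝ) ≠ 1) :
    ν {0} = ENNReal.ofReal zmid ∧ ν {1} = 0 := by
  -- basic real facts about zmid
  have hα0 : (0:ℝ) < α := by linarith
  have hα1 : (0:ℝ) < α + 1 := by linarith
  have hs4 : (0:ℝ) < 1/4 - 1/α := by
    have : 1/α < 1/4 := by rw [div_lt_div_iff₀ hα0 (by norm_num)]; linarith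
    linarith
  have hss : Real.sqrt (1/4 - 1/α) ^ 2 = 1/4 - 1/α := Real.sq_sqrt hs4.le
  have hsq_pos : 0 < Real.sqrt (1/4 - 1/α) := Real.sqrt_pos.mpr hs4
  have h1α : (0:ℝ) < 1/α := by positivity
  have hsq_lt : Real.sqrt (1/4 - 1/α) < 1/2 := by nlinarith [hsq_pos, h1α, hss]
  have hzpos : 0 < zmid := by rw [hz]; norm_num at hsq_lt ⊢; linarith
  have hzhalf : zmid < 1/2 := by rw [hz]; linarith
  have hinv : α * (1/α) = 1 := mul_one_div_cancel hα0.ne'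
  have hzprod : α * (zmid * (1 - zmid)) = 1 := by
    rw [hz]; norm_num [hz] at hss ⊢; linear_combination (-α) * hss + hinv
  -- measurability of the map
  have hfm : Measurable (fun q : ℝ × ℝ × ℝ × ℝ =>
      q.1 * (q.2.1 + (1 - q.2.1) * q.2.2.1 * q.2.2.2)) := by fun_prop
  set μχ : Measure ℝ := ENNReal.ofReal (α/(α+1)) • Measure.dirac 1
      + ENNReal.ofReal (1/(α+1)) • Measure.dirac 0 with hμχ
  have hβγ : ENNReal.ofReal (α/(α+1)) + ENNReal.ofReal (1/(α+1)) = 1 := by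
    rw [← ENNReal.ofReal_add (by positivity) (by positivity), ← ENNReal.ofReal_one]
    congr 1; field_simp
  haveI hχprob : IsProbabilityMeasure μχ := by
    constructor
    simp only [hμχ, Measure.add_apply, Measure.smul_apply, smul_eq_mul,
      measure_univ, mul_one]
    exact hβγ
  set μ := μχ.prod (ν.prod (ν.prod ν)) with hμ
  haveI : IsProbabilityMeasure μ := by rw [hμ]; infer_instance
  -- values of μχ
  have hχ1 : μχ {1} = ENNReal.ofReal (α/(α+1)) := by
    simp [hμχ, Measure.dirac_apply' _ (measurableSet_singleton _)]
  have hχ0 : μχ {0} = ENNReal.ofReal (1/(α+1)) := by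
    simp [hμχ, Measure.dirac_apply' _ (measurableSet_singleton _)]
  -- the product measure lives on T
  set T : Set (ℝ × ℝ × ℝ × ℝ) :=
    ({0,1} : Set ℝ) ×ˢ (Set.Icc 0 1 ×ˢ (Set.Icc 0 1 ×ˢ Set.Icc 0 1)) with hTdef
  have hmeas01 : MeasurableSet ({0,1} : Set ℝ) :=
    (measurableSet_singleton (1:ℝ)).insert 0
  have hTmeas : MeasurableSet T :=
    hmeas01.prod (measurableSet_Icc.prod (measurableSet_Icc.prod measurableSet_Icc))
  have hχ01 : μχ ({0,1} : Set ℝ) = 1 := by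
    simp only [hμχ, Measure.add_apply, Measure.smul_apply, smul_eq_mul]
    rw [Measure.dirac_apply' _ hmeas01, Measure.dirac_apply' _ hmeas01]
    simpa [one_div] using hβγ
  have hTfull : μ Tᶜ = 0 := by
    rw [prob_compl_eq_zero_iff hTmeas]
    rw [hμ, hTdef, Measure.prod_prod, Measure.prod_prod, Measure.prod_prod,
      hχ01, hsupp]
    simp
  -- preimage of {1}
  set R1 : Set (ℝ × ℝ × ℝ × ℝ) :=
    ({1} : Set ℝ) ×ˢ (({1} : Set ℝ) ×ˢ (Set.Icc 0 1 ×ˢ Set.Icc 0 1)) with hR1def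
  set R2 : Set (ℝ × ℝ × ℝ × ℝ) :=
    ({1} : Set ℝ) ×ˢ (Set.Ico 0 1 ×ˢ (({1} : Set ℝ) ×ˢ ({1} : Set ℝ))) with hR2def
  have hset1 : (fun q : ℝ × ℝ × ℝ × ℝ =>
      q.1 * (q.2.1 + (1 - q.2.1) * q.2.2.1 * q.2.2.2)) ⁻¹' {1} ∩ T = R1 ∪ R2 := by
    ext ⟨c, a, b, d⟩
    simp only [hR1def, hR2def, hTdef, Set.mem_inter_iff, Set.mem_preimage,
      Set.mem_singleton_iff, Set.mem_prod, Set.mem_union, Set.mem_Icc, Set.mem_Ico,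
      Set.mem_insert_iff]
    constructor
    · rintro ⟨heq, hc, ⟨ha0, ha1⟩, ⟨hb0, hb1⟩, hd0, hd1⟩
      rcases hc with hc | hc
      · exfalso; rw [hc] at heq; norm_num at heq
      · subst hc
        have hfac : (1 - a) * (1 - b * d) = 0 := by linear_combination -heq
        rcases mul_eq_zero.mp hfac with h | h
        · exact Or.inl ⟨rfl, by linarith, ⟨hb0, hb1⟩, hd0, hd1⟩
        · have hbd : b * d = 1 := by linarith
          have hb : b = 1 := by nlinarith
          have hd : d = 1 := by nlinarith
          by_cases ha : a = 1
          · exact Or.inl ⟨rfl, ha, ⟨hb0, hb1⟩, hd0, hd1⟩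
          · exact Or.inr ⟨rfl, ⟨ha0, lt_of_le_of_ne ha1 ha⟩, hb, hd⟩
    · rintro (⟨hc, ha, hb, hd⟩ | ⟨hc, ⟨ha0, ha1⟩, hb, hd⟩)
      · subst hc; subst ha
        exact ⟨by ring, Or.inr rfl, by norm_num, hb, hd⟩
      · subst hc; subst hb; subst hd
        exact ⟨by ring, Or.inr rfl, ⟨ha0, ha1.le⟩, by norm_num, by norm_num⟩
  have hR1meas : MeasurableSet R1 := (measurableSet_singleton _).prod
    ((measurableSet_singleton _).prod (measurableSet_Icc.prod measurableSet_Icc))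
  have hR2meas : MeasurableSet R2 := (measurableSet_singleton _).prod
    (measurableSet_Ico.prod ((measurableSet_singleton _).prod (measurableSet_singleton _)))
  have hdisj12 : Disjoint R1 R2 := by
    rw [Set.disjoint_left]
    rintro ⟨c, a, b, d⟩ h1 h2
    simp only [hR1def, hR2def, Set.mem_prod, Set.mem_singleton_iff, Set.mem_Ico] at h1 h2
    exact absurd h1.2.1 (by linarith [h2.2.1.2] : a ≠ 1)
  have hμR1 : μ R1 = ENNReal.ofReal (α/(α+1)) * ν {1} := by
    rw [hμ, hR1def, Measure.prod_prod, Measure.prod_prod, Measure.prod_prod,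
      hχ1, hsupp]
    ring
  have hμR2 : μ R2 = ENNReal.ofReal (α/(α+1)) * (ν (Set.Ico 0 1) * (ν {1} * ν {1})) := by
    rw [hμ, hR2def, Measure.prod_prod, Measure.prod_prod, Measure.prod_prod, hχ1]
  have e1 : ν {1} = ENNReal.ofReal (α/(α+1)) * ν {1}
      + ENNReal.ofReal (α/(α+1)) * (ν (Set.Ico 0 1) * (ν {1} * ν {1})) := by
    conv_lhs => rw [hRDE]
    rw [Measure.map_apply hfm (measurableSet_singleton (1:ℝ)),
      ← measure_inter_conull (t := T) hTfull, hset1,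
      measure_union hdisj12 hR2meas, hμR1, hμR2]
  -- preimage of {0}
  set Ra : Set (ℝ × ℝ × ℝ × ℝ) :=
    ({0} : Set ℝ) ×ˢ (Set.Icc 0 1 ×ˢ (Set.Icc 0 1 ×ˢ Set.Icc 0 1)) with hRadef
  set Rb : Set (ℝ × ℝ × ℝ × ℝ) :=
    ({1} : Set ℝ) ×ˢ (({0} : Set ℝ) ×ˢ (({0} : Set ℝ) ×ˢ Set.Icc 0 1)) with hRbdef
  set Rc : Set (ℝ × ℝ × ℝ × ℝ) :=
    ({1} : Set ℝ) ×ˢ (({0} : Set ℝ) ×ˢ (Set.Ioc 0 1 ×ˢ ({0} : Set ℝ))) with hRcdef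
  have hset0 : (fun q : ℝ × ℝ × ℝ × ℝ =>
      q.1 * (q.2.1 + (1 - q.2.1) * q.2.2.1 * q.2.2.2)) ⁻¹' {0} ∩ T = Ra ∪ (Rb ∪ Rc) := by
    ext ⟨c, a, b, d⟩
    simp only [hRadef, hRbdef, hRcdef, hTdef, Set.mem_inter_iff, Set.mem_preimage,
      Set.mem_singleton_iff, Set.mem_prod, Set.mem_union, Set.mem_Icc, Set.mem_Ioc,
      Set.mem_insert_iff]
    constructor
    · rintro ⟨heq, hc, ⟨ha0, ha1⟩, ⟨hb0, hb1⟩, hd0, hd1⟩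
      rcases hc with hc | hc
      · exact Or.inl ⟨hc, ⟨ha0, ha1⟩, ⟨hb0, hb1⟩, hd0, hd1⟩
      · subst hc
        rw [one_mul] at heq
        have hbd0 : 0 ≤ (1 - a) * b * d := by
          apply mul_nonneg (mul_nonneg (by linarith) hb0) hd0
        have ha : a = 0 := by linarith
        subst ha
        have hbd : b * d = 0 := by linarith [heq]
        rcases mul_eq_zero.mp hbd with h | h
        · exact Or.inr (Or.inl ⟨rfl, rfl, h, hd0, hd1⟩)
        · by_cases hb : b = 0
          · exact Or.inr (Or.inl ⟨rfl, rfl, hb, hd0, hd1⟩)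
          · exact Or.inr (Or.inr ⟨rfl, rfl, ⟨lt_of_le_of_ne hb0 (Ne.symm hb), hb1⟩, h⟩)
    · rintro (⟨hc, ha, hb, hd⟩ | ⟨hc, ha, hb, hd⟩ | ⟨hc, ha, hb, hd⟩)
      · subst hc
        exact ⟨by ring, Or.inl rfl, ha, hb, hd⟩
      · subst hc; subst ha; subst hb
        exact ⟨by ring, Or.inr rfl, by norm_num, by norm_num, hd⟩
      · subst hc; subst ha; subst hd
        exact ⟨by ring, Or.inr rfl, by norm_num, ⟨hb.1.le, hb.2⟩, by norm_num⟩
  have hRameas : MeasurableSet Ra := (measurableSet_singleton _).prod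
    (measurableSet_Icc.prod (measurableSet_Icc.prod measurableSet_Icc))
  have hRbmeas : MeasurableSet Rb := (measurableSet_singleton _).prod
    ((measurableSet_singleton _).prod ((measurableSet_singleton _).prod measurableSet_Icc))
  have hRcmeas : MeasurableSet Rc := (measurableSet_singleton _).prod
    ((measurableSet_singleton _).prod (measurableSet_Ioc.prod (measurableSet_singleton _)))
  have hdisj_bc : Disjoint Rb Rc := by
    rw [Set.disjoint_left]
    rintro ⟨c, a, b, d⟩ h1 h2
    simp only [hRbdef, hRcdef, Set.mem_prod, Set.mem_singleton_iff, Set.mem_Ioc] at h1 h2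
    exact absurd h1.2.2.1 (by linarith [h2.2.2.1.1] : b ≠ 0)
  have hdisj_abc : Disjoint Ra (Rb ∪ Rc) := by
    rw [Set.disjoint_left]
    rintro ⟨c, a, b, d⟩ h1 h2
    simp only [hRadef, hRbdef, hRcdef, Set.mem_prod, Set.mem_singleton_iff,
      Set.mem_union] at h1 h2
    rcases h2 with h2 | h2 <;> exact absurd h1.1 (by rw [h2.1]; norm_num)
  have hμRa : μ Ra = ENNReal.ofReal (1/(α+1)) := by
    rw [hμ, hRadef, Measure.prod_prod, Measure.prod_prod, Measure.prod_prod,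
      hχ0, hsupp]
    ring
  have hμRb : μ Rb = ENNReal.ofReal (α/(α+1)) * (ν {0} * ν {0}) := by
    rw [hμ, hRbdef, Measure.prod_prod, Measure.prod_prod, Measure.prod_prod,
      hχ1, hsupp]
    ring
  have hμRc : μ Rc = ENNReal.ofReal (α/(α+1)) * (ν {0} * (ν (Set.Ioc 0 1) * ν {0})) := by
    rw [hμ, hRcdef, Measure.prod_prod, Measure.prod_prod, Measure.prod_prod, hχ1]
  have e0 : ν {0} = ENNReal.ofReal (1/(α+1))
      + (ENNReal.ofReal (α/(α+1)) * (ν {0} * ν {0})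
        + ENNReal.ofReal (α/(α+1)) * (ν {0} * (ν (Set.Ioc 0 1) * ν {0}))) := by
    conv_lhs => rw [hRDE]
    rw [Measure.map_apply hfm (measurableSet_singleton (0:ℝ)),
      ← measure_inter_conull (t := T) hTfull, hset0,
      measure_union hdisj_abc (hRbmeas.union hRcmeas),
      measure_union hdisj_bc hRcmeas, hμRa, hμRb, hμRc]
  -- pass to real numbers
  set p0 : ℝ := (ν {0}).toReal with hp0def
  set p1 : ℝ := (ν {1}).toReal with hp1def
  set qI : ℝ := (ν (Set.Ioc 0 1)).toReal with hqIdef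
  set i0 : ℝ := (ν (Set.Ico 0 1)).toReal with hi0def
  have hfin : ∀ s : Set ℝ, ν s ≠ ⊤ := fun s => measure_ne_top ν s
  have hbne : (α + 1) ≠ 0 := ne_of_gt hα1
  have hbnn : (0:ℝ) ≤ α/(α+1) := by positivity
  have hgnn : (0:ℝ) ≤ 1/(α+1) := by positivity
  have re1 : p1 = (α/(α+1)) * p1 + (α/(α+1)) * (i0 * (p1 * p1)) := by
    have h := congrArg ENNReal.toReal e1
    rw [ENNReal.toReal_add (ENNReal.mul_ne_top ENNReal.ofReal_ne_top (hfin _))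
        (ENNReal.mul_ne_top ENNReal.ofReal_ne_top
          (ENNReal.mul_ne_top (hfin _) (ENNReal.mul_ne_top (hfin _) (hfin _))))] at h
    simp only [ENNReal.toReal_mul, ENNReal.toReal_ofReal hbnn] at h
    exact h
  have re0 : p0 = 1/(α+1) + ((α/(α+1)) * (p0 * p0)
      + (α/(α+1)) * (p0 * (qI * p0))) := by
    have h := congrArg ENNReal.toReal e0
    rw [ENNReal.toReal_add ENNReal.ofReal_ne_top
        (ENNReal.add_ne_top.mpr ⟨ENNReal.mul_ne_top ENNReal.ofReal_ne_top
          (ENNReal.mul_ne_top (hfin _) (hfin _)),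
          ENNReal.mul_ne_top ENNReal.ofReal_ne_top
          (ENNReal.mul_ne_top (hfin _) (ENNReal.mul_ne_top (hfin _) (hfin _)))⟩),
      ENNReal.toReal_add (ENNReal.mul_ne_top ENNReal.ofReal_ne_top
          (ENNReal.mul_ne_top (hfin _) (hfin _)))
        (ENNReal.mul_ne_top ENNReal.ofReal_ne_top
          (ENNReal.mul_ne_top (hfin _) (ENNReal.mul_ne_top (hfin _) (hfin _))))] at h
    simp only [ENNReal.toReal_mul, ENNReal.toReal_ofReal hbnn,
      ENNReal.toReal_ofReal hgnn] at h
    exact h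
  -- splitting the mass of [0,1]
  have hsplit1 : i0 + p1 = 1 := by
    have hd : Disjoint (Set.Ico (0:ℝ) 1) {1} := by
      rw [Set.disjoint_left]
      rintro x hx hx1
      rw [Set.mem_singleton_iff] at hx1
      exact absurd hx1 hx.2.ne
    have := measure_union (μ := ν) hd (measurableSet_singleton 1)
    rw [Set.Ico_union_right (by norm_num : (0:ℝ) ≤ 1), hsupp] at this
    have h := congrArg ENNReal.toReal this
    rw [ENNReal.toReal_add (hfin _) (hfin _)] at h
    simpa using h.symm
  have hsplit0 : p0 + qI = 1 := by
    have hd : Disjoint ({0} : Set ℝ) (Set.Ioc 0 1) := by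
      rw [Set.disjoint_left]
      rintro x hx hx1
      rw [Set.mem_singleton_iff] at hx
      exact absurd hx hx1.1.ne'
    have := measure_union (μ := ν) hd measurableSet_Ioc
    rw [Set.singleton_union, Set.Ioc_insert_left (by norm_num : (0:ℝ) ≤ 1), hsupp] at this
    have h := congrArg ENNReal.toReal this
    rw [ENNReal.toReal_add (hfin _) (hfin _)] at h
    simpa using h.symm
  -- the fixed point equations
  have hp1fix : p1 = α * p1 ^ 2 * (1 - p1) := by
    have hi : i0 = 1 - p1 := by linarith
    rw [hi] at re1
    field_simp at re1
    linear_combination re1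
  have hqfix : qI = α * qI ^ 2 * (1 - qI) := by
    have hp : p0 = 1 - qI := by linarith
    rw [hp] at re0
    field_simp at re0
    linear_combination -re0
  -- a.e. membership in [0,1]
  have hae : ∀ᵐ x ∂ν, x ∈ Set.Icc (0:ℝ) 1 := by
    have h0 : ν (Set.Icc (0:ℝ) 1)ᶜ = 0 :=
      (prob_compl_eq_zero_iff measurableSet_Icc).mpr hsupp
    rw [ae_iff]
    simpa [Set.compl_def] using h0
  have hint : Integrable (fun x => x) ν :=
    Integrable.mono' (integrable_const 1) measurable_id.aestronglyMeasurable
      (by filter_upwards [hae] with x hx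
          rw [Real.norm_eq_abs, abs_le]
          exact ⟨by linarith [hx.1], hx.2⟩)
  have hIoc_int : Integrable ((Set.Ioc (0:ℝ) 1).indicator fun _ => (1:ℝ)) ν :=
    (integrable_const 1).indicator measurableSet_Ioc
  have hOne_int : Integrable (({1} : Set ℝ).indicator fun _ => (1:ℝ)) ν :=
    (integrable_const 1).indicator (measurableSet_singleton 1)
  have hIoc_val : ∫ x, (Set.Ioc (0:ℝ) 1).indicator (fun _ => (1:ℝ)) x ∂ν = qI := by
    rw [integral_indicator_const (1:ℝ) measurableSet_Ioc]; simp [hqIdef, Measure.real]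
  have hOne_val : ∫ x, ({1} : Set ℝ).indicator (fun _ => (1:ℝ)) x ∂ν = p1 := by
    rw [integral_indicator_const (1:ℝ) (measurableSet_singleton 1)]; simp [hp1def, Measure.real]
  have hle_one : ∀ᵐ x ∂ν, ({1} : Set ℝ).indicator (fun _ => (1:ℝ)) x ≤ x := by
    filter_upwards [hae] with x hx
    by_cases h : x = 1
    · subst h; simp
    · rw [Set.indicator_of_notMem (by simpa using h)]
      exact hx.1
  have hle_Ioc : ∀ᵐ x ∂ν, x ≤ (Set.Ioc (0:ℝ) 1).indicator (fun _ => (1:ℝ)) x := by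
    filter_upwards [hae] with x hx
    by_cases h : x ∈ Set.Ioc (0:ℝ) 1
    · rw [Set.indicator_of_mem h]; exact hx.2
    · rw [Set.indicator_of_notMem h]
      simp only [Set.mem_Ioc, not_and_or, not_lt, not_le] at h
      rcases h with h | h
      · linarith
      · linarith [hx.2]
  have hp1_le : p1 ≤ zmid := by
    rw [← hmean, ← hOne_val]; exact integral_mono_ae hOne_int hint hle_one
  have hq_ge : zmid ≤ qI := by
    rw [← hmean, ← hIoc_val]; exact integral_mono_ae hint hIoc_int hle_Ioc
  -- ν is not concentrated on {0,1}
  have hnotae : ¬ (∀ᵐ x ∂ν, x ∈ ({0,1} : Set ℝ)) := by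
    intro h
    apply hmin
    rw [← prob_compl_eq_zero_iff hmeas01]
    rw [ae_iff] at h
    simpa [Set.compl_def] using h
  have hp1ne : p1 ≠ zmid := by
    intro hc
    apply hnotae
    have hzero : ∫ x, (x - ({1} : Set ℝ).indicator (fun _ => (1:ℝ)) x) ∂ν = 0 := by
      rw [integral_sub hint hOne_int, hmean, hOne_val, hc, sub_self]
    have hnn : 0 ≤ᵐ[ν] fun x => x - ({1} : Set ℝ).indicator (fun _ => (1:ℝ)) x := by
      filter_upwards [hle_one] with x hx
      simpa [sub_nonneg] using hx
    have hzae := (integral_eq_zero_iff_of_nonneg_ae hnn (hint.sub hOne_int)).mp hzero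
    filter_upwards [hzae, hae] with x hx hxI
    simp only [Pi.zero_apply] at hx
    by_cases h1 : x = 1
    · simp [h1]
    · rw [Set.indicator_of_notMem (by simpa using h1)] at hx
      simp only [sub_zero] at hx
      simp [hx]
  have hqne : qI ≠ zmid := by
    intro hc
    apply hnotae
    have hzero : ∫ x, ((Set.Ioc (0:ℝ) 1).indicator (fun _ => (1:ℝ)) x - x) ∂ν = 0 := by
      rw [integral_sub hIoc_int hint, hmean, hIoc_val, hc, sub_self]
    have hnn : 0 ≤ᵐ[ν] fun x => (Set.Ioc (0:ℝ) 1).indicator (fun _ => (1:ℝ)) x - x := by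
      filter_upwards [hle_Ioc] with x hx
      simpa [sub_nonneg] using hx
    have hzae := (integral_eq_zero_iff_of_nonneg_ae hnn (hIoc_int.sub hint)).mp hzero
    filter_upwards [hzae, hae] with x hx hxI
    simp only [Pi.zero_apply] at hx
    by_cases h1 : x ∈ Set.Ioc (0:ℝ) 1
    · rw [Set.indicator_of_mem h1] at hx
      have : x = 1 := by linarith
      simp [this]
    · rw [Set.indicator_of_notMem h1] at hx
      simp only [Set.mem_Ioc, not_and_or, not_lt, not_le] at h1
      have : x = 0 := by
        rcases h1 with h1 | h1
        · linarith [hxI.1]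
        · linarith [hxI.2]
      simp [this]
  -- identify the fixed points
  have hp1zero : p1 = 0 := by
    rcases cubic_roots' α zmid p1 hα0 hzprod hp1fix with h | h | h
    · exact h
    · exact absurd h hp1ne
    · linarith
  have hqval : qI = 1 - zmid := by
    rcases cubic_roots' α zmid qI hα0 hzprod hqfix with h | h | h
    · linarith
    · exact absurd h hqne
    · exact h
  have hp0val : p0 = zmid := by linarith
  constructor
  · rw [← hp0val, hp0def, ENNReal.ofReal_toReal (hfin _)]
  · have := hp1def ▸ hp1zero
    rcases (ENNReal.toReal_eq_zero_iff _).mp this with h | h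
    · exact h
    · exact absurd h (hfin _)
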